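/- For every n ≥ 1, the dimension of the canonical interval order I_n (the interval order whose elements are all closed intervals [i,j] with 1 ≤ i ≤ j ≤ n, ordered by [i,j] < [k,l] iff j < k) tends to infinity as n tends to infinity; in particular, interval orders have unbounded dimension. -/

import Mathlib

/-- `L` is a linear extension of the partial order on `α`. -/
def IsLinearExtension {α : Type*} [PartialOrder α] (L : α → α → Prop) : Prop :=
  IsLinearOrder α L ∧ ∀ x y : α, x ≤ y → L x y

/-- The order dimension of `α` is at most `t`. -/
def DimLE (α : Type*) [PartialOrder α] (t : ℕ) : Prop :=
  ∃ L : Fin t → α → α → Prop, (∀ i, IsLinearExtension (L i)) ∧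
    ∀ x y : α, x ≤ y ↔ ∀ i, L i x y

/-- The order dimension of a poset. -/
noncomputable def orderDim (α : Type*) [PartialOrder α] : ℕ := sInf {t | DimLE α t}

/-- The ground set of the canonical interval order on `n` endpoints: all intervals
`[i, j]` with `1 ≤ i ≤ j ≤ n`. -/
def CanonIntOrd (n : ℕ) : Type := {p : Fin n × Fin n // p.1 ≤ p.2}

/-- `[i,j] ≤ [k,l]` iff they are equal or `j < k`. -/
instance (n : ℕ) : PartialOrder (CanonIntOrd n) where
  le a b := a = b ∨ a.val.2 < b.val.1
  le_refl a := Or.inl rfl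
  le_trans a b c hab hbc := by
    rcases hab with rfl | h
    · exact hbc
    · rcases hbc with rfl | h'
      · exact Or.inr h
      · exact Or.inr (h.trans_le (b.2.trans h'.le))
  le_antisymm a b hab hba := by
    rcases hab with rfl | h
    · rfl
    · rcases hba with rfl | h'
      · rfl
      · exact absurd ((h.trans_le b.2).trans (h'.trans_le a.2)) (lt_irrefl _)

namespace Stmt18Aux

lemma le_iff {n : ℕ} (a b : CanonIntOrd n) :
    a ≤ b ↔ a = b ∨ (a.val.2 : ℕ) < (b.val.1 : ℕ) := Iff.rfl

lemma eq_iff {n : ℕ} (a b : CanonIntOrd n) :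
    a = b ↔ (a.val.1 : ℕ) = (b.val.1 : ℕ) ∧ (a.val.2 : ℕ) = (b.val.2 : ℕ) := by
  constructor
  · rintro rfl; exact ⟨rfl, rfl⟩
  · rintro ⟨h1, h2⟩
    exact Subtype.ext (Prod.ext (Fin.ext h1) (Fin.ext h2))

lemma lohi {n : ℕ} (a : CanonIntOrd n) :
    (a.val.1 : ℕ) ≤ (a.val.2 : ℕ) ∧ (a.val.1 : ℕ) < n ∧ (a.val.2 : ℕ) < n :=
  ⟨a.2, a.val.1.isLt, a.val.2.isLt⟩

/-! ### Upper bound: an explicit realizer of size `2 n` -/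

/-- Linearizing key for the extension indexed by `(m, σ)`. -/
def key (n m : ℕ) (σ : Bool) (x : CanonIntOrd n) : ℕ ×ₗ ℕ :=
  toLex <|
    if (x.val.2 : ℕ) < m then ((x.val.2 : ℕ), (x.val.1 : ℕ))
    else if m < (x.val.1 : ℕ) then (2 * (n + 1) + (x.val.1 : ℕ), (x.val.2 : ℕ))
    else ((n + 1) + (if σ then (x.val.1 : ℕ) else n - (x.val.1 : ℕ)),
          if σ then (x.val.2 : ℕ) else n - (x.val.2 : ℕ))

lemma key_inj {n m : ℕ} {σ : Bool} : Function.Injective (key n m σ) := by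
  intro x y h
  obtain ⟨hx, hx1, hx2⟩ := lohi x
  obtain ⟨hy, hy1, hy2⟩ := lohi y
  rw [eq_iff]
  unfold key at h
  rw [toLex_inj] at h
  split_ifs at h with h1 h2 h3 h4 h5 h6 h7 h8 h9 <;>
    · rw [Prod.mk.injEq] at h
      cases σ <;> simp_all <;> omega

lemma key_strictMono {n m : ℕ} {σ : Bool} {x y : CanonIntOrd n}
    (h : (x.val.2 : ℕ) < (y.val.1 : ℕ)) : key n m σ x < key n m σ y := by
  obtain ⟨hx, hx1, hx2⟩ := lohi x
  obtain ⟨hy, hy1, hy2⟩ := lohi y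
  unfold key
  rw [Prod.Lex.lt_iff]
  left
  split_ifs with h1 h2 h3 h4 h5 <;> cases σ <;> simp_all <;> omega

/-- The `(m, σ)`-indexed linear extension. -/
def Lrel (n m : ℕ) (σ : Bool) (x y : CanonIntOrd n) : Prop :=
  key n m σ x ≤ key n m σ y

lemma Lrel_isExt (n m : ℕ) (σ : Bool) : IsLinearExtension (Lrel n m σ) := by
  constructor
  · exact
      { refl := fun a => le_refl _
        trans := fun a b c hab hbc => le_trans hab hbc
        antisymm := fun a b h1 h2 => key_inj (le_antisymm h1 h2)
        total := fun a b => le_total _ _ }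
  · intro x y hxy
    rcases hxy with rfl | h
    · exact le_refl _
    · exact (key_strictMono h).le

lemma key_rev {n : ℕ} {x y : CanonIntOrd n} (hne : x ≠ y)
    (h1 : (x.val.1 : ℕ) ≤ (y.val.2 : ℕ)) (h2 : (y.val.1 : ℕ) ≤ (x.val.2 : ℕ)) :
    ∃ σ : Bool, key n (max (x.val.1 : ℕ) (y.val.1 : ℕ)) σ y
      < key n (max (x.val.1 : ℕ) (y.val.1 : ℕ)) σ x := by
  obtain ⟨hx, hx1, hx2⟩ := lohi x
  obtain ⟨hy, hy1, hy2⟩ := lohi y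
  have hne' : ¬((x.val.1 : ℕ) = (y.val.1 : ℕ) ∧ (x.val.2 : ℕ) = (y.val.2 : ℕ)) := by
    rw [← eq_iff] at *; exact hne
  set m := max (x.val.1 : ℕ) (y.val.1 : ℕ) with hm
  have cx1 : ¬((x.val.2 : ℕ) < m) := by omega
  have cx2 : ¬(m < (x.val.1 : ℕ)) := by omega
  have cy1 : ¬((y.val.2 : ℕ) < m) := by omega
  have cy2 : ¬(m < (y.val.1 : ℕ)) := by omega
  by_cases hlex : (y.val.1 : ℕ) < (x.val.1 : ℕ) ∨
      ((y.val.1 : ℕ) = (x.val.1 : ℕ) ∧ (y.val.2 : ℕ) < (x.val.2 : ℕ))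
  · refine ⟨true, ?_⟩
    unfold key
    rw [if_neg cy1, if_neg cy2, if_neg cx1, if_neg cx2, Prod.Lex.lt_iff]
    simp only [if_true, ofLex_toLex]
    omega
  · refine ⟨false, ?_⟩
    unfold key
    rw [if_neg cy1, if_neg cy2, if_neg cx1, if_neg cx2, Prod.Lex.lt_iff]
    simp only [Bool.false_eq_true, if_false, ofLex_toLex]
    omega

lemma dimle_canon {n : ℕ} (hn : 1 ≤ n) : DimLE (CanonIntOrd n) (2 * n) := by
  refine ⟨fun idx => Lrel n (idx.val % n) (decide (idx.val < n)), fun i => Lrel_isExt _ _ _, ?_⟩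
  intro x y
  constructor
  · intro h i
    exact (Lrel_isExt n _ _).2 x y h
  · intro hall
    by_contra hxy
    rw [le_iff] at hxy
    push_neg at hxy
    obtain ⟨hne, hnlt⟩ := hxy
    obtain ⟨hx, hx1, hx2⟩ := lohi x
    obtain ⟨hy, hy1, hy2⟩ := lohi y
    by_cases hop : (y.val.2 : ℕ) < (x.val.1 : ℕ)
    · -- y < x in the poset, so every extension puts y below x
      have := hall ⟨0, by omega⟩
      have hk : key n (0 % n) (decide ((0:ℕ) < n)) y < key n (0 % n) (decide ((0:ℕ) < n)) x :=
        key_strictMono hop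
      exact absurd this (not_le_of_gt hk)
    · -- incomparable
      push_neg at hop
      obtain ⟨σ, hσ⟩ := key_rev hne (by omega) (by omega)
      set m := max (x.val.1 : ℕ) (y.val.1 : ℕ) with hm
      have hmn : m < n := by omega
      cases σ with
      | true =>
        have h2 : Lrel n (m % n) (decide (m < n)) x y := hall ⟨m, by omega⟩
        rw [Nat.mod_eq_of_lt hmn, decide_eq_true hmn] at h2
        exact absurd h2 (not_le_of_gt hσ)
      | false =>
        have h2 : Lrel n ((n + m) % n) (decide (n + m < n)) x y := hall ⟨n + m, by omega⟩
        rw [Nat.add_mod_left n m, Nat.mod_eq_of_lt hmn,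
          decide_eq_false (by omega : ¬(n + m < n))] at h2
        exact absurd h2 (not_le_of_gt hσ)

/-! ### Lower bound -/

open Classical in
/-- The coloring of pairs `i < j` by the pair of "reversing sets". -/
noncomputable def colorF {n t : ℕ} (L : Fin t → CanonIntOrd n → CanonIntOrd n → Prop)
    (i j : Fin n) : (Fin t → Bool) × (Fin t → Bool) :=
  if h : i ≤ j then
    (fun α => decide (¬ L α ⟨(i, j), h⟩ ⟨(j, j), le_refl j⟩),
     fun α => decide (¬ L α ⟨(i, i), le_refl i⟩ ⟨(i, j), h⟩))
  else (fun _ => false, fun _ => false)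

lemma lowb {n t : ℕ} (h : DimLE (CanonIntOrd n) t) :
    n ≤ Fintype.card (((Fin t → Bool) × (Fin t → Bool)) → Bool) := by
  classical
  obtain ⟨L, hL, hreal⟩ := h
  have htot : ∀ (α : Fin t) (a b : CanonIntOrd n), L α a b ∨ L α b a :=
    fun α => (hL α).1.toTotal.total
  have htr : ∀ (α : Fin t) (a b c : CanonIntOrd n), L α a b → L α b c → L α a c :=
    fun α a b c => (hL α).1.toIsPartialOrder.toIsPreorder.toIsTrans.trans a b c
  have has : ∀ (α : Fin t) (a b : CanonIntOrd n), L α a b → L α b a → a = b :=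
    fun α a b => (hL α).1.toIsPartialOrder.toAntisymm.antisymm a b
  -- the coloring is proper on the shift graph
  have hproper : ∀ i j k : Fin n, i < j → j < k → colorF L i j ≠ colorF L j k := by
    intro i j k hij hjk hcol
    have hijn : (i : ℕ) < (j : ℕ) := hij
    have hjkn : (j : ℕ) < (k : ℕ) := hjk
    set A : CanonIntOrd n := ⟨(i, j), le_of_lt hij⟩ with hA
    set B : CanonIntOrd n := ⟨(j, k), le_of_lt hjk⟩ with hB
    set p : CanonIntOrd n := ⟨(i, i), le_refl i⟩ with hp
    set q : CanonIntOrd n := ⟨(j, j), le_refl j⟩ with hq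
    set r : CanonIntOrd n := ⟨(k, k), le_refl k⟩ with hr
    unfold colorF at hcol
    rw [dif_pos (le_of_lt hij), dif_pos (le_of_lt hjk)] at hcol
    -- there is an extension putting B below A
    have hAB : ¬ (A ≤ B) := by
      rintro (he | hlt)
      · have : (i : ℕ) = (j : ℕ) := congrArg (fun z : CanonIntOrd n => (z.val.1 : ℕ)) he
        omega
      · exact absurd hlt (lt_irrefl _)
    have : ¬ ∀ α, L α A B := fun hh => hAB ((hreal A B).2 hh)
    push_neg at this
    obtain ⟨α, hα⟩ := this
    have hBA : L α B A := (htot α A B).resolve_left hα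
    -- Step 1 : L α B r
    have hBr : L α B r := by
      by_contra hc
      have hrB : L α r B := (htot α B r).resolve_left hc
      have hrA : L α r A := htr α r B A hrB hBA
      have hAr : L α A r := (hL α).2 A r (Or.inr hjk)
      have : A = r := has α A r hAr hrA
      have : (i : ℕ) = (k : ℕ) := congrArg (fun z : CanonIntOrd n => (z.val.1 : ℕ)) this
      omega
    -- hence (by equality of S-components) L α A q
    have hS := congrFun (congrArg Prod.fst hcol) α
    rw [decide_eq_decide] at hS
    have hAq : L α A q := by
      by_contra hc
      exact hS.mp hc hBr
    -- Step 2 : ¬ L α q B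
    have hqB : ¬ L α q B := by
      intro hc
      have hBq : L α B q := htr α B A q hBA hAq
      have : q = B := has α q B hc hBq
      have : (j : ℕ) = (k : ℕ) := congrArg (fun z : CanonIntOrd n => ((z.val.2 : Fin n) : ℕ)) this
      omega
    -- hence (by equality of T-components) L α A p
    have hT := congrFun (congrArg Prod.snd hcol) α
    rw [decide_eq_decide] at hT
    have hpA : ¬ L α p A := hT.mpr hqB
    have hAp : L α A p := (htot α p A).resolve_left hpA
    have hpB : L α p B := (hL α).2 p B (Or.inr hij)
    have hABL : L α A B := htr α A p B hAp hpB
    have : A = B := has α A B hABL hBA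
    have : (i : ℕ) = (j : ℕ) := congrArg (fun z : CanonIntOrd n => (z.val.1 : ℕ)) this
    omega
  -- the injective encoding of endpoints
  set φ : Fin n → (((Fin t → Bool) × (Fin t → Bool)) → Bool) :=
    fun i c => decide (∃ j, i < j ∧ colorF L i j = c) with hφdef
  have hφ : Function.Injective φ := by
    intro a b hab
    by_contra hneq
    have haux : ∀ a b : Fin n, a < b → φ a = φ b → False := by
      intro a b h hab
      have h1 : φ a (colorF L a b) = true := decide_eq_true ⟨b, h, rfl⟩
      have h2 : φ b (colorF L a b) = true := (congrFun hab (colorF L a b)) ▸ h1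
      obtain ⟨k, hbk, hck⟩ := of_decide_eq_true h2
      exact hproper a b k h hbk hck.symm
    rcases lt_trichotomy a b with h | h | h
    · exact haux a b h hab
    · exact hneq h
    · exact haux b a h hab.symm
  calc n = Fintype.card (Fin n) := (Fintype.card_fin n).symm
    _ ≤ _ := Fintype.card_le_of_injective φ hφ

end Stmt18Aux

theorem stmt_18 :
    Filter.Tendsto (fun n => orderDim (CanonIntOrd n)) Filter.atTop Filter.atTop := by
  rw [Filter.tendsto_atTop]
  intro b
  rw [Filter.eventually_atTop]
  refine ⟨(Finset.range b).sup
    (fun t => Fintype.card (((Fin t → Bool) × (Fin t → Bool)) → Bool)) + 1, fun n hn => ?_⟩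
  have hn1 : 1 ≤ n := by omega
  have hne : {t | DimLE (CanonIntOrd n) t}.Nonempty := ⟨2 * n, Stmt18Aux.dimle_canon hn1⟩
  have hmem : DimLE (CanonIntOrd n) (orderDim (CanonIntOrd n)) := Nat.sInf_mem hne
  by_contra hlt
  rw [not_le] at hlt
  have h1 := Stmt18Aux.lowb hmem
  have h2 := Finset.le_sup (f := fun t => Fintype.card (((Fin t → Bool) × (Fin t → Bool)) → Bool))
    (Finset.mem_range.mpr hlt)
  have h2' : Fintype.card ((Fin (orderDim (CanonIntOrd n)) → Bool)
      × (Fin (orderDim (CanonIntOrd n)) → Bool) → Bool)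
      ≤ (Finset.range b).sup
        (fun t => Fintype.card (((Fin t → Bool) × (Fin t → Bool)) → Bool)) := h2
  omega
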